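/- Let r ≥ 4 be an integer and let c : Fin (2r+5) × Fin (11r+1) → Fin r be a coloring of the ((2r+5) × (11r+1))-grid containing no monochromatic grid rectangle and no rainbow grid rectangle. Then in row 0 there do not exist two distinct colors each appearing at least 3 times; that is, there do not exist colors t ≠ t' with |{j : c(0,j) = t}| ≥ 3 and |{j : c(0,j) = t'}| ≥ 3. (Equivalently, the second-largest color class of row 0 has size at most 2.) -/

import Mathlib

open Finset

/-- Auxiliary: sum of three set cards bounded via universe and pairwise intersections. -/
lemma gc_card_three_le {α : Type*} [DecidableEq α] (A B C U : Finset α)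
    (hA : A ⊆ U) (hB : B ⊆ U) (hC : C ⊆ U) :
    A.card + B.card + C.card ≤ U.card + (A ∩ B).card + (A ∩ C).card + (B ∩ C).card := by
  have h1 := Finset.card_inter_add_card_union A B
  have h2 := Finset.card_inter_add_card_union (A ∪ B) C
  have h3 : ((A ∪ B) ∩ C).card ≤ (A ∩ C).card + (B ∩ C).card := by
    rw [Finset.union_inter_distrib_right]; exact Finset.card_union_le _ _
  have h4 : (A ∪ B ∪ C).card ≤ U.card := Finset.card_le_card (by
    intro x hx
    rcases Finset.mem_union.1 hx with h | h
    · rcases Finset.mem_union.1 h with h | h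
      exacts [hA h, hB h]
    · exact hC h)
  omega

/-- Auxiliary: no four subsets of U, each of size ≥ |U|-1 with |U| ≥ 3,
    can pairwise intersect in at most one element. -/
lemma gc_star4 {α : Type*} [DecidableEq α] (U A B C D : Finset α) (hU : 3 ≤ U.card)
    (hA : A ⊆ U) (hB : B ⊆ U) (hC : C ⊆ U) (hD : D ⊆ U)
    (lA : U.card ≤ A.card + 1) (lB : U.card ≤ B.card + 1)
    (lC : U.card ≤ C.card + 1) (lD : U.card ≤ D.card + 1)
    (iAB : (A ∩ B).card ≤ 1) (iAC : (A ∩ C).card ≤ 1) (iAD : (A ∩ D).card ≤ 1)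
    (iBC : (B ∩ C).card ≤ 1) (iBD : (B ∩ D).card ≤ 1) (iCD : (C ∩ D).card ≤ 1) : False := by
  have hU3 : U.card = 3 := by
    have h1 := Finset.card_inter_add_card_union A B
    have h2 : (A ∪ B).card ≤ U.card := Finset.card_le_card (Finset.union_subset hA hB)
    omega
  -- each of the four sets has card exactly 2
  have key2 : ∀ M N : Finset α, M ⊆ U → N ⊆ U → U.card ≤ M.card + 1 → U.card ≤ N.card + 1 →
      (M ∩ N).card ≤ 1 → M.card = 2 := by
    intro M N hM hN lM lN iMN
    have hMle : M.card ≤ 3 := hU3 ▸ Finset.card_le_card hM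
    rcases Nat.lt_or_ge M.card 3 with h | h
    · omega
    · exfalso
      have hMU : M = U := Finset.eq_of_subset_of_card_le hM (by omega)
      have : M ∩ N = N := by rw [hMU]; exact Finset.inter_eq_right.2 hN
      rw [this] at iMN
      omega
  have cA : A.card = 2 := key2 A B hA hB lA lB iAB
  have cB : B.card = 2 := key2 B A hB hA lB lA (by rwa [Finset.inter_comm])
  have cC : C.card = 2 := key2 C A hC hA lC lA (by rwa [Finset.inter_comm])
  have cD : D.card = 2 := key2 D A hD hA lD lA (by rwa [Finset.inter_comm])
  have neq : ∀ M N : Finset α, M.card = 2 → (M ∩ N).card ≤ 1 → M ≠ N := by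
    intro M N cM iMN hMN
    subst hMN
    rw [Finset.inter_self] at iMN
    omega
  have nAB := neq A B cA iAB
  have nAC := neq A C cA iAC
  have nAD := neq A D cA iAD
  have nBC := neq B C cB iBC
  have nBD := neq B D cB iBD
  have nCD := neq C D cC iCD
  have hsub : ({A, B, C, D} : Finset (Finset α)) ⊆ U.powersetCard 2 := by
    intro M hM
    rw [Finset.mem_powersetCard]
    simp only [Finset.mem_insert, Finset.mem_singleton] at hM
    rcases hM with rfl | rfl | rfl | rfl
    exacts [⟨hA, cA⟩, ⟨hB, cB⟩, ⟨hC, cC⟩, ⟨hD, cD⟩]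
  have hcard4 : ({A, B, C, D} : Finset (Finset α)).card = 4 := by
    rw [Finset.card_insert_of_notMem (by simp [nAB, nAC, nAD]),
        Finset.card_insert_of_notMem (by simp [nBC, nBD]),
        Finset.card_insert_of_notMem (by simp [nCD]),
        Finset.card_singleton]
  have := Finset.card_le_card hsub
  rw [hcard4, Finset.card_powersetCard, hU3] at this
  norm_num at this

set_option maxHeartbeats 2000000 in
theorem grid_claim4
    (r : ℕ) (hr : 4 ≤ r)
    (c : Fin (2 * r + 5) × Fin (11 * r + 1) → Fin r)
    (hmono : ¬ ∃ (i i' : Fin (2 * r + 5)) (j j' : Fin (11 * r + 1)),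
      i ≠ i' ∧ j ≠ j' ∧
      c (i, j) = c (i', j) ∧ c (i', j) = c (i, j') ∧ c (i, j') = c (i', j'))
    (hrainbow : ¬ ∃ (i i' : Fin (2 * r + 5)) (j j' : Fin (11 * r + 1)),
      i ≠ i' ∧ j ≠ j' ∧
      c (i, j) ≠ c (i', j) ∧ c (i, j) ≠ c (i, j') ∧ c (i, j) ≠ c (i', j') ∧
      c (i', j) ≠ c (i, j') ∧ c (i', j) ≠ c (i', j') ∧ c (i, j') ≠ c (i', j')) :
    ¬ ∃ t t' : Fin r, t ≠ t' ∧
      3 ≤ (Finset.univ.filter fun j : Fin (11 * r + 1) => c (0, j) = t).card ∧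
      3 ≤ (Finset.univ.filter fun j : Fin (11 * r + 1) => c (0, j) = t').card := by
  classical
  rintro ⟨t, t', htt', ht3, ht'3⟩
  -- basic consequences of the hypotheses
  have hM : ∀ (p q : Fin (2 * r + 5)) (x y : Fin (11 * r + 1)), p ≠ q → x ≠ y →
      c (p, x) = c (q, x) → c (q, x) = c (p, y) → c (p, y) = c (q, y) → False := by
    intro p q x y hpq hxy h1 h2 h3
    exact hmono ⟨p, q, x, y, hpq, hxy, h1, h2, h3⟩
  have hR : ∀ (p q : Fin (2 * r + 5)) (x y : Fin (11 * r + 1)), p ≠ q →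
      c (p, x) ≠ c (q, x) → c (p, y) ≠ c (q, y) →
      (c (p, x) = c (p, y) ∨ c (p, x) = c (q, y) ∨ c (q, x) = c (p, y) ∨ c (q, x) = c (q, y)) := by
    intro p q x y hpq h1 h2
    by_cases hxy : x = y
    · subst hxy; exact Or.inl rfl
    by_contra hcon
    push_neg at hcon
    exact hrainbow ⟨p, q, x, y, hpq, hxy, h1, hcon.1, hcon.2.1, hcon.2.2.1, hcon.2.2.2, h2⟩
  have agr : ∀ (p q : Fin (2 * r + 5)), p ≠ q → ∀ v : Fin r,
      (Finset.univ.filter fun x => c (p, x) = v ∧ c (q, x) = v).card ≤ 1 := by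
    intro p q hpq v
    refine Finset.card_le_one.mpr ?_
    intro a ha b hb
    simp only [Finset.mem_filter, Finset.mem_univ, true_and] at ha hb
    by_contra hab
    exact hM p q a b hpq hab (ha.1.trans ha.2.symm) (ha.2.trans hb.1.symm) (hb.1.trans hb.2.symm)
  have agrB : ∀ (p q : Fin (2 * r + 5)), p ≠ q → ∀ v : Fin r, ∀ S : Finset (Fin (11 * r + 1)),
      (∀ x ∈ S, c (p, x) = v ∧ c (q, x) = v) → S.card ≤ 1 := by
    intro p q hpq v S hS
    refine le_trans (Finset.card_le_card ?_) (agr p q hpq v)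
    intro x hx
    simp only [Finset.mem_filter, Finset.mem_univ, true_and]
    exact hS x hx
  set Tt : Finset (Fin (11 * r + 1)) := Finset.univ.filter (fun x => c (0, x) = t) with hTtdef
  set Ts : Finset (Fin (11 * r + 1)) := Finset.univ.filter (fun x => c (0, x) = t') with hTsdef
  have memTt : ∀ x, x ∈ Tt ↔ c (0, x) = t := by
    intro x; rw [hTtdef]; simp
  have memTs : ∀ x, x ∈ Ts ↔ c (0, x) = t' := by
    intro x; rw [hTsdef]; simp
  have hYle : Tt.card + Ts.card ≤ 11 * r + 1 := by
    have hdisj : Disjoint Tt Ts := by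
      rw [Finset.disjoint_left]
      intro x hx hx'
      exact htt' (((memTt x).1 hx).symm.trans ((memTs x).1 hx'))
    calc Tt.card + Ts.card = (Tt ∪ Ts).card := (Finset.card_union_of_disjoint hdisj).symm
    _ ≤ (Finset.univ : Finset (Fin (11 * r + 1))).card := Finset.card_le_card (Finset.subset_univ _)
    _ = 11 * r + 1 := by simp
  have hoffT : ∀ i : Fin (2 * r + 5), i ≠ 0 → ∃ x, c (0, x) = t ∧ c (i, x) ≠ t := by
    intro i hi
    by_contra hcon
    push_neg at hcon
    have : Tt.card ≤ 1 := by
      refine agrB 0 i (Ne.symm hi) t Tt ?_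
      intro x hx
      exact ⟨(memTt x).1 hx, hcon x ((memTt x).1 hx)⟩
    omega
  have hoffS : ∀ i : Fin (2 * r + 5), i ≠ 0 → ∃ x, c (0, x) = t' ∧ c (i, x) ≠ t' := by
    intro i hi
    by_contra hcon
    push_neg at hcon
    have : Ts.card ≤ 1 := by
      refine agrB 0 i (Ne.symm hi) t' Ts ?_
      intro x hx
      exact ⟨(memTs x).1 hx, hcon x ((memTs x).1 hx)⟩
    omega
  have inter : ∀ (i : Fin (2 * r + 5)), i ≠ 0 → ∀ x y, c (i, x) ≠ c (0, x) → c (i, y) ≠ c (0, y) →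
      (c (0, x) = c (0, y) ∨ c (0, x) = c (i, y) ∨ c (i, x) = c (0, y) ∨ c (i, x) = c (i, y)) := by
    intro i hi x y hx hy
    exact hR 0 i x y (Ne.symm hi) (Ne.symm hx) (Ne.symm hy)
  -- coverage: every nonzero row is star-t, star-t', star-z or triangle {t,t',w}
  have hcover : ∀ i : Fin (2 * r + 5), i ≠ 0 →
      (∀ x, c (i, x) ≠ c (0, x) → (c (0, x) = t ∨ c (i, x) = t)) ∨
      (∀ x, c (i, x) ≠ c (0, x) → (c (0, x) = t' ∨ c (i, x) = t')) ∨
      (∃ z, z ≠ t ∧ z ≠ t' ∧ ∀ x, c (i, x) ≠ c (0, x) → (c (0, x) = z ∨ c (i, x) = z)) ∨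
      (∃ w, w ≠ t ∧ w ≠ t' ∧ ∀ x, c (i, x) ≠ c (0, x) →
        ((c (0, x) = t ∨ c (0, x) = t' ∨ c (0, x) = w) ∧
         (c (i, x) = t ∨ c (i, x) = t' ∨ c (i, x) = w))) := by
    intro i hi
    obtain ⟨xt, hxt0, hxti⟩ := hoffT i hi
    obtain ⟨yt, hyt0, hyti⟩ := hoffS i hi
    have oxt : c (i, xt) ≠ c (0, xt) := by rw [hxt0]; exact hxti
    have oyt : c (i, yt) ≠ c (0, yt) := by rw [hyt0]; exact hyti
    by_cases hst : ∀ x, c (i, x) ≠ c (0, x) → (c (0, x) = t ∨ c (i, x) = t)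
    · exact Or.inl hst
    by_cases hst' : ∀ x, c (i, x) ≠ c (0, x) → (c (0, x) = t' ∨ c (i, x) = t')
    · exact Or.inr (Or.inl hst')
    push_neg at hst hst'
    obtain ⟨x1, hx1o, hx1a, hx1b⟩ := hst
    obtain ⟨x2, hx2o, hx2a, hx2b⟩ := hst'
    by_cases hout : ∃ x5, c (i, x5) ≠ c (0, x5) ∧ (c (0, x5) ≠ t ∧ c (0, x5) ≠ t') ∧
        (c (i, x5) ≠ t ∧ c (i, x5) ≠ t')
    · -- star-z case (or contradiction)
      obtain ⟨x5, ho5, ⟨hp1, hp2⟩, hq1, hq2⟩ := hout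
      refine Or.inr (Or.inr (Or.inl ?_))
      by_contra hns
      push_neg at hns
      have h3 := hns (c (0, x5)) hp1 hp2
      have h4 := hns (c (i, x5)) hq1 hq2
      obtain ⟨x3, ho3, h3a, h3b⟩ := h3
      obtain ⟨x4, ho4, h4a, h4b⟩ := h4
      have hq3 : c (0, x3) = c (i, x5) ∨ c (i, x3) = c (i, x5) := by
        rcases inter i hi x3 x5 ho3 ho5 with h | h | h | h
        · exact absurd h h3a
        · exact Or.inl h
        · exact absurd h h3b
        · exact Or.inr h
      have hp4 : c (0, x4) = c (0, x5) ∨ c (i, x4) = c (0, x5) := by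
        rcases inter i hi x4 x5 ho4 ho5 with h | h | h | h
        · exact Or.inl h
        · exact absurd h h4a
        · exact Or.inr h
        · exact absurd h h4b
      have ha : c (i, xt) = c (0, x5) ∨ c (i, xt) = c (i, x5) := by
        rcases inter i hi xt x5 oxt ho5 with h | h | h | h
        · rw [hxt0] at h; exact absurd h.symm hp1
        · rw [hxt0] at h; exact absurd h.symm hq1
        · exact Or.inl h
        · exact Or.inr h
      have hb : c (i, yt) = c (0, x5) ∨ c (i, yt) = c (i, x5) := by
        rcases inter i hi yt x5 oyt ho5 with h | h | h | h
        · rw [hyt0] at h; exact absurd h.symm hp2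
        · rw [hyt0] at h; exact absurd h.symm hq2
        · exact Or.inl h
        · exact Or.inr h
      rcases ha with hap | haq
      · -- c (i,xt) = p ; hence t ∈ pair3
        have hT3 : c (0, x3) = t ∨ c (i, x3) = t := by
          rcases inter i hi xt x3 oxt ho3 with h | h | h | h
          · rw [hxt0] at h; exact Or.inl h.symm
          · rw [hxt0] at h; exact Or.inr h.symm
          · exact absurd (h.symm.trans hap) h3a
          · exact absurd (h.symm.trans hap) h3b
        have two3 : (c (0, x3) = c (i, x5) ∧ c (i, x3) = t) ∨
            (c (0, x3) = t ∧ c (i, x3) = c (i, x5)) := by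
          rcases hq3 with hq | hq <;> rcases hT3 with hT | hT
          · exact absurd (hq.symm.trans hT) hq1
          · exact Or.inl ⟨hq, hT⟩
          · exact Or.inr ⟨hT, hq⟩
          · exact absurd (hq.symm.trans hT) hq1
        have mem3a : c (0, x3) = c (i, x5) ∨ c (0, x3) = t := by
          rcases two3 with ⟨h1, _⟩ | ⟨h1, _⟩; exacts [Or.inl h1, Or.inr h1]
        have mem3b : c (i, x3) = c (i, x5) ∨ c (i, x3) = t := by
          rcases two3 with ⟨_, h2⟩ | ⟨_, h2⟩; exacts [Or.inr h2, Or.inl h2]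
        rcases hb with hbp | hbq
        · -- c (i,yt) = p : use pair (yt, x3)
          rcases inter i hi yt x3 oyt ho3 with h | h | h | h
          · rw [hyt0] at h
            rcases mem3a with h1 | h1
            · exact hq2 (h.trans h1).symm
            · exact htt' (h.trans h1).symm
          · rw [hyt0] at h
            rcases mem3b with h1 | h1
            · exact hq2 (h.trans h1).symm
            · exact htt' (h.trans h1).symm
          · rcases mem3a with h1 | h1
            · exact ho5 ((hbp.symm.trans h).trans h1).symm
            · exact hp1 ((hbp.symm.trans h).trans h1)
          · rcases mem3b with h1 | h1
            · exact ho5 ((hbp.symm.trans h).trans h1).symm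
            · exact hp1 ((hbp.symm.trans h).trans h1)
        · -- c (i,yt) = q : pin pair4 = {p,t'}, then clash pair3/pair4
          have hT4 : c (0, x4) = t' ∨ c (i, x4) = t' := by
            rcases inter i hi yt x4 oyt ho4 with h | h | h | h
            · rw [hyt0] at h; exact Or.inl h.symm
            · rw [hyt0] at h; exact Or.inr h.symm
            · exact absurd (h.symm.trans hbq) h4a
            · exact absurd (h.symm.trans hbq) h4b
          have two4 : (c (0, x4) = c (0, x5) ∧ c (i, x4) = t') ∨
              (c (0, x4) = t' ∧ c (i, x4) = c (0, x5)) := by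
            rcases hp4 with hp | hp <;> rcases hT4 with hT | hT
            · exact absurd (hp.symm.trans hT) hp2
            · exact Or.inl ⟨hp, hT⟩
            · exact Or.inr ⟨hT, hp⟩
            · exact absurd (hp.symm.trans hT) hp2
          have mem4a : c (0, x4) = c (0, x5) ∨ c (0, x4) = t' := by
            rcases two4 with ⟨h1, _⟩ | ⟨h1, _⟩; exacts [Or.inl h1, Or.inr h1]
          have mem4b : c (i, x4) = c (0, x5) ∨ c (i, x4) = t' := by
            rcases two4 with ⟨_, h2⟩ | ⟨_, h2⟩; exacts [Or.inr h2, Or.inl h2]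
          have hclash : ∀ u v : Fin r, u = c (i, x5) ∨ u = t → v = c (0, x5) ∨ v = t' →
              u = v → False := by
            rintro u v (rfl | rfl) (rfl | rfl) huv
            · exact ho5 huv
            · exact hq2 huv
            · exact hp1 huv.symm
            · exact htt' huv
          rcases inter i hi x3 x4 ho3 ho4 with h | h | h | h
          · exact hclash _ _ mem3a mem4a h
          · exact hclash _ _ mem3a mem4b h
          · exact hclash _ _ mem3b mem4a h
          · exact hclash _ _ mem3b mem4b h
      · -- c (i,xt) = q ; hence t ∈ pair4
        have hT4 : c (0, x4) = t ∨ c (i, x4) = t := by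
          rcases inter i hi xt x4 oxt ho4 with h | h | h | h
          · rw [hxt0] at h; exact Or.inl h.symm
          · rw [hxt0] at h; exact Or.inr h.symm
          · exact absurd (h.symm.trans haq) h4a
          · exact absurd (h.symm.trans haq) h4b
        have two4 : (c (0, x4) = c (0, x5) ∧ c (i, x4) = t) ∨
            (c (0, x4) = t ∧ c (i, x4) = c (0, x5)) := by
          rcases hp4 with hp | hp <;> rcases hT4 with hT | hT
          · exact absurd (hp.symm.trans hT) hp1
          · exact Or.inl ⟨hp, hT⟩
          · exact Or.inr ⟨hT, hp⟩
          · exact absurd (hp.symm.trans hT) hp1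
        have mem4a : c (0, x4) = c (0, x5) ∨ c (0, x4) = t := by
          rcases two4 with ⟨h1, _⟩ | ⟨h1, _⟩; exacts [Or.inl h1, Or.inr h1]
        have mem4b : c (i, x4) = c (0, x5) ∨ c (i, x4) = t := by
          rcases two4 with ⟨_, h2⟩ | ⟨_, h2⟩; exacts [Or.inr h2, Or.inl h2]
        rcases hb with hbp | hbq
        · -- c (i,yt) = p : pin pair3 = {q,t'}, clash with pair4 = {p,t}
          have hT3 : c (0, x3) = t' ∨ c (i, x3) = t' := by
            rcases inter i hi yt x3 oyt ho3 with h | h | h | h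
            · rw [hyt0] at h; exact Or.inl h.symm
            · rw [hyt0] at h; exact Or.inr h.symm
            · exact absurd (h.symm.trans hbp) h3a
            · exact absurd (h.symm.trans hbp) h3b
          have two3 : (c (0, x3) = c (i, x5) ∧ c (i, x3) = t') ∨
              (c (0, x3) = t' ∧ c (i, x3) = c (i, x5)) := by
            rcases hq3 with hq | hq <;> rcases hT3 with hT | hT
            · exact absurd (hq.symm.trans hT) hq2
            · exact Or.inl ⟨hq, hT⟩
            · exact Or.inr ⟨hT, hq⟩
            · exact absurd (hq.symm.trans hT) hq2
          have mem3a : c (0, x3) = c (i, x5) ∨ c (0, x3) = t' := by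
            rcases two3 with ⟨h1, _⟩ | ⟨h1, _⟩; exacts [Or.inl h1, Or.inr h1]
          have mem3b : c (i, x3) = c (i, x5) ∨ c (i, x3) = t' := by
            rcases two3 with ⟨_, h2⟩ | ⟨_, h2⟩; exacts [Or.inr h2, Or.inl h2]
          have hclash : ∀ u v : Fin r, u = c (i, x5) ∨ u = t' → v = c (0, x5) ∨ v = t →
              u = v → False := by
            rintro u v (rfl | rfl) (rfl | rfl) huv
            · exact ho5 huv
            · exact hq1 huv
            · exact hp2 huv.symm
            · exact htt' huv.symm
          rcases inter i hi x3 x4 ho3 ho4 with h | h | h | h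
          · exact hclash _ _ mem3a mem4a h
          · exact hclash _ _ mem3a mem4b h
          · exact hclash _ _ mem3b mem4a h
          · exact hclash _ _ mem3b mem4b h
        · -- c (i,yt) = q : use pair (yt, x4)
          rcases inter i hi yt x4 oyt ho4 with h | h | h | h
          · rw [hyt0] at h
            rcases mem4a with h1 | h1
            · exact hp2 (h.trans h1).symm
            · exact htt' (h.trans h1).symm
          · rw [hyt0] at h
            rcases mem4b with h1 | h1
            · exact hp2 (h.trans h1).symm
            · exact htt' (h.trans h1).symm
          · rcases mem4a with h1 | h1
            · exact ho5 ((hbq.symm.trans h).trans h1)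
            · exact hq1 ((hbq.symm.trans h).trans h1)
          · rcases mem4b with h1 | h1
            · exact ho5 ((hbq.symm.trans h).trans h1)
            · exact hq1 ((hbq.symm.trans h).trans h1)
    · -- triangle case
      have hmeet : ∀ x, c (i, x) ≠ c (0, x) →
          (c (0, x) = t ∨ c (0, x) = t' ∨ c (i, x) = t ∨ c (i, x) = t') := by
        intro x hx
        by_contra hcon
        push_neg at hcon
        exact hout ⟨x, hx, ⟨hcon.1, hcon.2.1⟩, hcon.2.2.1, hcon.2.2.2⟩
      obtain ⟨e1, he1t, he1s, hpat1⟩ : ∃ e, e ≠ t ∧ e ≠ t' ∧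
          ((c (0, x1) = t' ∧ c (i, x1) = e) ∨ (c (0, x1) = e ∧ c (i, x1) = t')) := by
        rcases hmeet x1 hx1o with h | h | h | h
        · exact absurd h hx1a
        · exact ⟨c (i, x1), hx1b, fun hh => hx1o (hh.trans h.symm), Or.inl ⟨h, rfl⟩⟩
        · exact absurd h hx1b
        · exact ⟨c (0, x1), hx1a, fun hh => hx1o (h.trans hh.symm), Or.inr ⟨rfl, h⟩⟩
      obtain ⟨e2, he2t, he2s, hpat2⟩ : ∃ e, e ≠ t ∧ e ≠ t' ∧
          ((c (0, x2) = t ∧ c (i, x2) = e) ∨ (c (0, x2) = e ∧ c (i, x2) = t)) := by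
        rcases hmeet x2 hx2o with h | h | h | h
        · exact ⟨c (i, x2), fun hh => hx2o (hh.trans h.symm), hx2b, Or.inl ⟨h, rfl⟩⟩
        · exact absurd h hx2a
        · exact ⟨c (0, x2), fun hh => hx2o (h.trans hh.symm), hx2a, Or.inr ⟨rfl, h⟩⟩
        · exact absurd h hx2b
      have mem1a : c (0, x1) = t' ∨ c (0, x1) = e1 := by
        rcases hpat1 with ⟨h1, _⟩ | ⟨h1, _⟩; exacts [Or.inl h1, Or.inr h1]
      have mem1b : c (i, x1) = t' ∨ c (i, x1) = e1 := by
        rcases hpat1 with ⟨_, h2⟩ | ⟨_, h2⟩; exacts [Or.inr h2, Or.inl h2]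
      have mem2a : c (0, x2) = t ∨ c (0, x2) = e2 := by
        rcases hpat2 with ⟨h1, _⟩ | ⟨h1, _⟩; exacts [Or.inl h1, Or.inr h1]
      have mem2b : c (i, x2) = t ∨ c (i, x2) = e2 := by
        rcases hpat2 with ⟨_, h2⟩ | ⟨_, h2⟩; exacts [Or.inr h2, Or.inl h2]
      have hglue : ∀ u v : Fin r, u = t' ∨ u = e1 → v = t ∨ v = e2 → u = v → e1 = e2 := by
        rintro u v (rfl | rfl) (rfl | rfl) huv
        · exact absurd huv.symm htt'
        · exact absurd huv.symm he2s
        · exact absurd huv he1t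
        · exact huv
      have hee : e1 = e2 := by
        rcases inter i hi x1 x2 hx1o hx2o with h | h | h | h
        · exact hglue _ _ mem1a mem2a h
        · exact hglue _ _ mem1a mem2b h
        · exact hglue _ _ mem1b mem2a h
        · exact hglue _ _ mem1b mem2b h
      subst hee
      refine Or.inr (Or.inr (Or.inr ⟨e1, he1t, he1s, ?_⟩))
      intro x hxo
      have hci : c (i, x) = t ∨ c (i, x) = t' ∨ c (i, x) = e1 := by
        by_contra hcon
        push_neg at hcon
        obtain ⟨hc1, hc2, hc3⟩ := hcon
        have hc01 : c (0, x) = t' ∨ c (0, x) = e1 := by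
          rcases inter i hi x x1 hxo hx1o with h | h | h | h
          · rcases mem1a with h1 | h1
            · exact Or.inl (h.trans h1)
            · exact Or.inr (h.trans h1)
          · rcases mem1b with h1 | h1
            · exact Or.inl (h.trans h1)
            · exact Or.inr (h.trans h1)
          · rcases mem1a with h1 | h1
            · exact absurd (h.trans h1) hc2
            · exact absurd (h.trans h1) hc3
          · rcases mem1b with h1 | h1
            · exact absurd (h.trans h1) hc2
            · exact absurd (h.trans h1) hc3
        have hc02 : c (0, x) = t ∨ c (0, x) = e1 := by
          rcases inter i hi x x2 hxo hx2o with h | h | h | h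
          · rcases mem2a with h1 | h1
            · exact Or.inl (h.trans h1)
            · exact Or.inr (h.trans h1)
          · rcases mem2b with h1 | h1
            · exact Or.inl (h.trans h1)
            · exact Or.inr (h.trans h1)
          · rcases mem2a with h1 | h1
            · exact absurd (h.trans h1) hc1
            · exact absurd (h.trans h1) hc3
          · rcases mem2b with h1 | h1
            · exact absurd (h.trans h1) hc1
            · exact absurd (h.trans h1) hc3
        have hc0e : c (0, x) = e1 := by
          rcases hc01 with h | h
          · rcases hc02 with h' | h'
            · exact absurd (h'.symm.trans h) htt'
            · exact h'
          · exact h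
        rcases hmeet x hxo with h | h | h | h
        · exact he1t (hc0e.symm.trans h)
        · exact he1s (hc0e.symm.trans h)
        · exact hc1 h
        · exact hc2 h
      have hc0 : c (0, x) = t ∨ c (0, x) = t' ∨ c (0, x) = e1 := by
        by_contra hcon
        push_neg at hcon
        obtain ⟨hc1, hc2, hc3⟩ := hcon
        have hci1 : c (i, x) = t' ∨ c (i, x) = e1 := by
          rcases inter i hi x x1 hxo hx1o with h | h | h | h
          · rcases mem1a with h1 | h1
            · exact absurd (h.trans h1) hc2
            · exact absurd (h.trans h1) hc3
          · rcases mem1b with h1 | h1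
            · exact absurd (h.trans h1) hc2
            · exact absurd (h.trans h1) hc3
          · rcases mem1a with h1 | h1
            · exact Or.inl (h.trans h1)
            · exact Or.inr (h.trans h1)
          · rcases mem1b with h1 | h1
            · exact Or.inl (h.trans h1)
            · exact Or.inr (h.trans h1)
        have hci2 : c (i, x) = t ∨ c (i, x) = e1 := by
          rcases inter i hi x x2 hxo hx2o with h | h | h | h
          · rcases mem2a with h1 | h1
            · exact absurd (h.trans h1) hc1
            · exact absurd (h.trans h1) hc3
          · rcases mem2b with h1 | h1
            · exact absurd (h.trans h1) hc1
            · exact absurd (h.trans h1) hc3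
          · rcases mem2a with h1 | h1
            · exact Or.inl (h.trans h1)
            · exact Or.inr (h.trans h1)
          · rcases mem2b with h1 | h1
            · exact Or.inl (h.trans h1)
            · exact Or.inr (h.trans h1)
        have hcie : c (i, x) = e1 := by
          rcases hci1 with h | h
          · rcases hci2 with h' | h'
            · exact absurd (h'.symm.trans h) htt'
            · exact h'
          · exact h
        rcases hmeet x hxo with h | h | h | h
        · exact hc1 h
        · exact hc2 h
        · exact he1t (hcie.symm.trans h)
        · exact he1s (hcie.symm.trans h)
      exact ⟨hc0, hci⟩
  -- structural counting lemmas
  have hStarTt : ∀ i : Fin (2 * r + 5), i ≠ 0 → ∀ z, z ≠ t →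
      (∀ x, c (i, x) ≠ c (0, x) → (c (0, x) = z ∨ c (i, x) = z)) →
      Tt.card ≤ (Tt.filter fun x => c (i, x) = z).card + 1 := by
    intro i hi z hz hstar
    have hsub : Tt ⊆ (Tt.filter fun x => c (i, x) = z) ∪ (Tt.filter fun x => c (i, x) = t) := by
      intro x hx
      have hx0 : c (0, x) = t := (memTt x).1 hx
      by_cases hd : c (i, x) = c (0, x)
      · exact Finset.mem_union_right _ (Finset.mem_filter.2 ⟨hx, hd.trans hx0⟩)
      · rcases hstar x hd with h | h
        · exact absurd (h.symm.trans hx0) hz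
        · exact Finset.mem_union_left _ (Finset.mem_filter.2 ⟨hx, h⟩)
    have hdiag : (Tt.filter fun x => c (i, x) = t).card ≤ 1 := by
      refine agrB 0 i (Ne.symm hi) t _ ?_
      intro x hx
      have h := Finset.mem_filter.1 hx
      exact ⟨(memTt x).1 h.1, h.2⟩
    have h1 := Finset.card_le_card hsub
    have h2 := Finset.card_union_le (Tt.filter fun x => c (i, x) = z) (Tt.filter fun x => c (i, x) = t)
    omega
  have hStarTs : ∀ i : Fin (2 * r + 5), i ≠ 0 → ∀ z, z ≠ t' →
      (∀ x, c (i, x) ≠ c (0, x) → (c (0, x) = z ∨ c (i, x) = z)) →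
      Ts.card ≤ (Ts.filter fun x => c (i, x) = z).card + 1 := by
    intro i hi z hz hstar
    have hsub : Ts ⊆ (Ts.filter fun x => c (i, x) = z) ∪ (Ts.filter fun x => c (i, x) = t') := by
      intro x hx
      have hx0 : c (0, x) = t' := (memTs x).1 hx
      by_cases hd : c (i, x) = c (0, x)
      · exact Finset.mem_union_right _ (Finset.mem_filter.2 ⟨hx, hd.trans hx0⟩)
      · rcases hstar x hd with h | h
        · exact absurd (h.symm.trans hx0) hz
        · exact Finset.mem_union_left _ (Finset.mem_filter.2 ⟨hx, h⟩)
    have hdiag : (Ts.filter fun x => c (i, x) = t').card ≤ 1 := by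
      refine agrB 0 i (Ne.symm hi) t' _ ?_
      intro x hx
      have h := Finset.mem_filter.1 hx
      exact ⟨(memTs x).1 h.1, h.2⟩
    have h1 := Finset.card_le_card hsub
    have h2 := Finset.card_union_le (Ts.filter fun x => c (i, x) = z) (Ts.filter fun x => c (i, x) = t')
    omega
  have hTriBound : ∀ i : Fin (2 * r + 5), i ≠ 0 → ∀ w : Fin r,
      (∀ x, c (i, x) ≠ c (0, x) →
        ((c (0, x) = t ∨ c (0, x) = t' ∨ c (0, x) = w) ∧
         (c (i, x) = t ∨ c (i, x) = t' ∨ c (i, x) = w))) →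
      Tt.card + Ts.card ≤
        ((Tt.filter fun x => c (i, x) = t').card + (Ts.filter fun x => c (i, x) = t).card) +
        ((Tt.filter fun x => c (i, x) = w).card + (Ts.filter fun x => c (i, x) = w).card) + 2 := by
    intro i hi w htri
    have hsub1 : Tt ⊆ (Tt.filter fun x => c (i, x) = t) ∪
        ((Tt.filter fun x => c (i, x) = t') ∪ (Tt.filter fun x => c (i, x) = w)) := by
      intro x hx
      by_cases hd : c (i, x) = c (0, x)
      · exact Finset.mem_union_left _ (Finset.mem_filter.2 ⟨hx, hd.trans ((memTt x).1 hx)⟩)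
      · rcases (htri x hd).2 with h | h | h
        · exact Finset.mem_union_left _ (Finset.mem_filter.2 ⟨hx, h⟩)
        · exact Finset.mem_union_right _ (Finset.mem_union_left _ (Finset.mem_filter.2 ⟨hx, h⟩))
        · exact Finset.mem_union_right _ (Finset.mem_union_right _ (Finset.mem_filter.2 ⟨hx, h⟩))
    have hsub2 : Ts ⊆ (Ts.filter fun x => c (i, x) = t') ∪
        ((Ts.filter fun x => c (i, x) = t) ∪ (Ts.filter fun x => c (i, x) = w)) := by
      intro x hx
      by_cases hd : c (i, x) = c (0, x)
      · exact Finset.mem_union_left _ (Finset.mem_filter.2 ⟨hx, hd.trans ((memTs x).1 hx)⟩)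
      · rcases (htri x hd).2 with h | h | h
        · exact Finset.mem_union_right _ (Finset.mem_union_left _ (Finset.mem_filter.2 ⟨hx, h⟩))
        · exact Finset.mem_union_left _ (Finset.mem_filter.2 ⟨hx, h⟩)
        · exact Finset.mem_union_right _ (Finset.mem_union_right _ (Finset.mem_filter.2 ⟨hx, h⟩))
    have hd1 : (Tt.filter fun x => c (i, x) = t).card ≤ 1 := by
      refine agrB 0 i (Ne.symm hi) t _ ?_
      intro x hx
      have h := Finset.mem_filter.1 hx
      exact ⟨(memTt x).1 h.1, h.2⟩
    have hd2 : (Ts.filter fun x => c (i, x) = t').card ≤ 1 := by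
      refine agrB 0 i (Ne.symm hi) t' _ ?_
      intro x hx
      have h := Finset.mem_filter.1 hx
      exact ⟨(memTs x).1 h.1, h.2⟩
    have h1 := Finset.card_le_card hsub1
    have h2 := Finset.card_le_card hsub2
    have h3 := Finset.card_union_le (Tt.filter fun x => c (i, x) = t)
      ((Tt.filter fun x => c (i, x) = t') ∪ (Tt.filter fun x => c (i, x) = w))
    have h4 := Finset.card_union_le (Tt.filter fun x => c (i, x) = t') (Tt.filter fun x => c (i, x) = w)
    have h5 := Finset.card_union_le (Ts.filter fun x => c (i, x) = t')
      ((Ts.filter fun x => c (i, x) = t) ∪ (Ts.filter fun x => c (i, x) = w))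
    have h6 := Finset.card_union_le (Ts.filter fun x => c (i, x) = t) (Ts.filter fun x => c (i, x) = w)
    omega
  have hTriUnique : ∀ i : Fin (2 * r + 5), i ≠ 0 → ∀ w : Fin r,
      (∀ x, c (i, x) ≠ c (0, x) →
        ((c (0, x) = t ∨ c (0, x) = t' ∨ c (0, x) = w) ∧
         (c (i, x) = t ∨ c (i, x) = t' ∨ c (i, x) = w))) →
      ∀ u : Fin r, u ≠ t → u ≠ t' → u ≠ w →
      (Finset.univ.filter fun x => c (0, x) = u).card ≤ 1 := by
    intro i hi w htri u hu1 hu2 hu3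
    refine agrB 0 i (Ne.symm hi) u _ ?_
    intro x hx
    simp only [Finset.mem_filter, Finset.mem_univ, true_and] at hx
    refine ⟨hx, ?_⟩
    by_cases hd : c (i, x) = c (0, x)
    · exact hd.trans hx
    · rcases (htri x hd).1 with h | h | h
      · exact absurd (hx.symm.trans h) hu1
      · exact absurd (hx.symm.trans h) hu2
      · exact absurd (hx.symm.trans h) hu3
  -- the class sets
  set E : Finset (Fin (2 * r + 5)) := Finset.univ.erase 0 with hEdef
  have hmemE : ∀ i, i ∈ E ↔ i ≠ 0 := by
    intro i; rw [hEdef]; simp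
  have hEcard : E.card = 2 * r + 4 := by
    rw [hEdef, Finset.card_erase_of_mem (Finset.mem_univ _)]
    simp only [Finset.card_univ, Fintype.card_fin]
    omega
  set R1 := E.filter (fun i => ∀ x, c (i, x) ≠ c (0, x) → (c (0, x) = t ∨ c (i, x) = t)) with hR1def
  set R2 := E.filter (fun i => ∀ x, c (i, x) ≠ c (0, x) → (c (0, x) = t' ∨ c (i, x) = t')) with hR2def
  set RS := E.filter (fun i => ∃ z, z ≠ t ∧ z ≠ t' ∧
      ∀ x, c (i, x) ≠ c (0, x) → (c (0, x) = z ∨ c (i, x) = z)) with hRSdef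
  set RW := E.filter (fun i => ¬(∃ z, z ≠ t ∧ z ≠ t' ∧
      ∀ x, c (i, x) ≠ c (0, x) → (c (0, x) = z ∨ c (i, x) = z)) ∧
      (∃ w, w ≠ t ∧ w ≠ t' ∧ ∀ x, c (i, x) ≠ c (0, x) →
        ((c (0, x) = t ∨ c (0, x) = t' ∨ c (0, x) = w) ∧
         (c (i, x) = t ∨ c (i, x) = t' ∨ c (i, x) = w)))) with hRWdef
  have hcoverE : E ⊆ R1 ∪ R2 ∪ (RS ∪ RW) := by
    intro i hiE
    have hi0 : i ≠ 0 := (hmemE i).1 hiE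
    simp only [Finset.mem_union]
    rcases hcover i hi0 with h | h | h | h
    · exact Or.inl (Or.inl (Finset.mem_filter.2 ⟨hiE, h⟩))
    · exact Or.inl (Or.inr (Finset.mem_filter.2 ⟨hiE, h⟩))
    · exact Or.inr (Or.inl (Finset.mem_filter.2 ⟨hiE, h⟩))
    · by_cases hz : ∃ z, z ≠ t ∧ z ≠ t' ∧
          ∀ x, c (i, x) ≠ c (0, x) → (c (0, x) = z ∨ c (i, x) = z)
      · exact Or.inr (Or.inl (Finset.mem_filter.2 ⟨hiE, hz⟩))
      · exact Or.inr (Or.inr (Finset.mem_filter.2 ⟨hiE, hz, h⟩))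
  have hne0RS : ∀ i ∈ RS, i ≠ (0 : Fin (2 * r + 5)) := fun i hi =>
    (hmemE i).1 (Finset.mem_filter.1 hi).1
  have hne0RW : ∀ i ∈ RW, i ≠ (0 : Fin (2 * r + 5)) := fun i hi =>
    (hmemE i).1 (Finset.mem_filter.1 hi).1
  -- the choice function for the distinguished colour of a row
  obtain ⟨gz, hgzRS, hgzRW⟩ : ∃ gz : Fin (2 * r + 5) → Fin r,
      (∀ i ∈ RS, gz i ≠ t ∧ gz i ≠ t' ∧
        ∀ x, c (i, x) ≠ c (0, x) → (c (0, x) = gz i ∨ c (i, x) = gz i)) ∧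
      (∀ i ∈ RW, gz i ≠ t ∧ gz i ≠ t' ∧
        ∀ x, c (i, x) ≠ c (0, x) →
          ((c (0, x) = t ∨ c (0, x) = t' ∨ c (0, x) = gz i) ∧
           (c (i, x) = t ∨ c (i, x) = t' ∨ c (i, x) = gz i))) := by
    refine ⟨fun i => if h : (∃ z, z ≠ t ∧ z ≠ t' ∧
        ∀ x, c (i, x) ≠ c (0, x) → (c (0, x) = z ∨ c (i, x) = z)) then h.choose
      else if h' : (∃ w, w ≠ t ∧ w ≠ t' ∧ ∀ x, c (i, x) ≠ c (0, x) →
        ((c (0, x) = t ∨ c (0, x) = t' ∨ c (0, x) = w) ∧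
         (c (i, x) = t ∨ c (i, x) = t' ∨ c (i, x) = w))) then h'.choose else t, ?_, ?_⟩
    · intro i hi
      have h := (Finset.mem_filter.1 hi).2
      simp only [dif_pos h]
      exact h.choose_spec
    · intro i hi
      have h := (Finset.mem_filter.1 hi).2
      simp only [dif_neg h.1, dif_pos h.2]
      exact h.2.choose_spec
  -- star rows with colour outside {t,t'} have pairwise different colours
  have RSinj : ∀ i ∈ RS, ∀ j ∈ RS, gz i = gz j → i = j := by
    intro i hi j hj hij
    by_contra hne
    obtain ⟨hit, his, hstari⟩ := hgzRS i hi
    obtain ⟨hjt, hjs, hstarj⟩ := hgzRS j hj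
    rw [hij] at hstari hit his
    have hZi := hStarTt i (hne0RS i hi) (gz j) hit hstari
    have hZj := hStarTt j (hne0RS j hj) (gz j) hjt hstarj
    have hZi' := hStarTs i (hne0RS i hi) (gz j) his hstari
    have hZj' := hStarTs j (hne0RS j hj) (gz j) hjs hstarj
    have hx : ∃ x, x ∈ Tt ∧ c (i, x) = gz j ∧ c (j, x) = gz j := by
      have h1 := Finset.card_inter_add_card_union
        (Tt.filter fun x => c (i, x) = gz j) (Tt.filter fun x => c (j, x) = gz j)
      have h2 : ((Tt.filter fun x => c (i, x) = gz j) ∪ (Tt.filter fun x => c (j, x) = gz j)).card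
          ≤ Tt.card := Finset.card_le_card (Finset.union_subset (Finset.filter_subset _ _)
            (Finset.filter_subset _ _))
      obtain ⟨x, hxmem⟩ := Finset.card_pos.1 (show 0 <
          ((Tt.filter fun x => c (i, x) = gz j) ∩ (Tt.filter fun x => c (j, x) = gz j)).card by omega)
      have h3 := Finset.mem_inter.1 hxmem
      exact ⟨x, (Finset.mem_filter.1 h3.1).1, (Finset.mem_filter.1 h3.1).2,
        (Finset.mem_filter.1 h3.2).2⟩
    have hy : ∃ y, y ∈ Ts ∧ c (i, y) = gz j ∧ c (j, y) = gz j := by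
      have h1 := Finset.card_inter_add_card_union
        (Ts.filter fun x => c (i, x) = gz j) (Ts.filter fun x => c (j, x) = gz j)
      have h2 : ((Ts.filter fun x => c (i, x) = gz j) ∪ (Ts.filter fun x => c (j, x) = gz j)).card
          ≤ Ts.card := Finset.card_le_card (Finset.union_subset (Finset.filter_subset _ _)
            (Finset.filter_subset _ _))
      obtain ⟨y, hymem⟩ := Finset.card_pos.1 (show 0 <
          ((Ts.filter fun x => c (i, x) = gz j) ∩ (Ts.filter fun x => c (j, x) = gz j)).card by omega)
      have h3 := Finset.mem_inter.1 hymem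
      exact ⟨y, (Finset.mem_filter.1 h3.1).1, (Finset.mem_filter.1 h3.1).2,
        (Finset.mem_filter.1 h3.2).2⟩
    obtain ⟨x, hxT, hxi, hxj⟩ := hx
    obtain ⟨y, hyT, hyi, hyj⟩ := hy
    have hxy : x ≠ y := by
      intro hh
      exact htt' (((memTt x).1 hxT).symm.trans (by rw [hh]; exact (memTs y).1 hyT))
    exact hM i j x y hne hxy (hxi.trans hxj.symm) (hxj.trans hyi.symm) (hyi.trans hyj.symm)
  set Kc : Finset (Fin r) := Finset.univ.filter (fun u => ¬(u = t ∨ u = t')) with hKcdef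
  have hKccard : Kc.card + 2 = r := by
    have h := Finset.card_filter_add_card_filter_not
      (s := (Finset.univ : Finset (Fin r))) (p := fun u => (u = t ∨ u = t'))
    have hset : Finset.univ.filter (fun u : Fin r => (u = t ∨ u = t')) = {t, t'} := by
      ext u; simp
    rw [hset] at h
    have h2 : ({t, t'} : Finset (Fin r)).card = 2 := by
      rw [Finset.card_insert_of_notMem (by simp [htt']), Finset.card_singleton]
    rw [hKcdef]
    simp only [Finset.card_univ, Fintype.card_fin] at h
    omega
  have hRScard : RS.card ≤ Kc.card := by
    refine Finset.card_le_card_of_injOn gz ?_ ?_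
    · intro i hi
      rw [hKcdef]
      simp only [Finset.mem_coe, Finset.mem_filter, Finset.mem_univ, true_and]
      rintro (h | h)
      · exact (hgzRS i hi).1 h
      · exact (hgzRS i hi).2.1 h
    · intro i hi j hj hij
      exact RSinj i hi j hj hij
  -- swap-heavy rows
  set SH : Fin (2 * r + 5) → Prop := fun i =>
    5 * r ≤ (Tt.filter fun x => c (i, x) = t').card + (Ts.filter fun x => c (i, x) = t).card + 1
    with hSHdef
  have hSH3 : ∀ i1 i2 i3 : Fin (2 * r + 5), i1 ≠ i2 → i1 ≠ i3 → i2 ≠ i3 →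
      SH i1 → SH i2 → SH i3 → False := by
    intro i1 i2 i3 h12 h13 h23 s1 s2 s3
    simp only [hSHdef] at s1 s2 s3
    have hiaA : ∀ (a b : Fin (2 * r + 5)), a ≠ b →
        ((Tt.filter fun x => c (a, x) = t') ∩ (Tt.filter fun x => c (b, x) = t')).card ≤ 1 := by
      intro a b hab
      refine agrB a b hab t' _ ?_
      intro x hx
      have h := Finset.mem_inter.1 hx
      exact ⟨(Finset.mem_filter.1 h.1).2, (Finset.mem_filter.1 h.2).2⟩
    have hiaB : ∀ (a b : Fin (2 * r + 5)), a ≠ b →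
        ((Ts.filter fun x => c (a, x) = t) ∩ (Ts.filter fun x => c (b, x) = t)).card ≤ 1 := by
      intro a b hab
      refine agrB a b hab t _ ?_
      intro x hx
      have h := Finset.mem_inter.1 hx
      exact ⟨(Finset.mem_filter.1 h.1).2, (Finset.mem_filter.1 h.2).2⟩
    have hA := gc_card_three_le (Tt.filter fun x => c (i1, x) = t')
      (Tt.filter fun x => c (i2, x) = t') (Tt.filter fun x => c (i3, x) = t') Tt
      (Finset.filter_subset _ _) (Finset.filter_subset _ _) (Finset.filter_subset _ _)
    have hB := gc_card_three_le (Ts.filter fun x => c (i1, x) = t)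
      (Ts.filter fun x => c (i2, x) = t) (Ts.filter fun x => c (i3, x) = t) Ts
      (Finset.filter_subset _ _) (Finset.filter_subset _ _) (Finset.filter_subset _ _)
    have a12 := hiaA i1 i2 h12
    have a13 := hiaA i1 i3 h13
    have a23 := hiaA i2 i3 h23
    have b12 := hiaB i1 i2 h12
    have b13 := hiaB i1 i3 h13
    have b23 := hiaB i2 i3 h23
    omega
  -- main bound on the star/triangle classes
  have hRSW : (RS ∪ RW).card ≤ r := by
    by_cases hbig : ∃ v, v ≠ t ∧ v ≠ t' ∧
        2 ≤ (Finset.univ.filter fun x => c (0, x) = v).card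
    · obtain ⟨v, hvt, hvs, hv2⟩ := hbig
      have hgweq : ∀ i ∈ RW, gz i = v := by
        intro i hi
        by_contra hne
        have h := hTriUnique i (hne0RW i hi) (gz i) (hgzRW i hi).2.2 v hvt hvs
          (fun hh => hne hh.symm)
        omega
      have hRWcard : RW.card ≤ 2 := by
        by_contra hcon
        push_neg at hcon
        obtain ⟨S, hS, hScard⟩ := Finset.exists_subset_card_eq (s := RW) (n := 3) (by omega)
        obtain ⟨i1, i2, i3, h12, h13, h23, rfl⟩ := Finset.card_eq_three.1 hScard
        have hi1 : i1 ∈ RW := hS (by simp)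
        have hi2 : i2 ∈ RW := hS (by simp)
        have hi3 : i3 ∈ RW := hS (by simp)
        have htri : ∀ i ∈ RW, ∀ x, c (i, x) ≠ c (0, x) →
            ((c (0, x) = t ∨ c (0, x) = t' ∨ c (0, x) = v) ∧
             (c (i, x) = t ∨ c (i, x) = t' ∨ c (i, x) = v)) := by
          intro i hi x hx
          have h := (hgzRW i hi).2.2 x hx
          rw [hgweq i hi] at h
          exact h
        have hvcard : ({t, t', v} : Finset (Fin r)).card ≤ 3 := by
          refine le_trans (Finset.card_insert_le _ _) ?_
          have h := Finset.card_insert_le t' ({v} : Finset (Fin r))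
          simp only [Finset.card_singleton] at h
          omega
        have hX0 : 10 * r + 4 ≤ (Finset.univ.filter
            (fun x : Fin (11 * r + 1) => c (0, x) = t ∨ c (0, x) = t' ∨ c (0, x) = v)).card := by
          have hKc3 : (Finset.univ.filter
              (fun u : Fin r => ¬(u = t ∨ u = t' ∨ u = v))).card + 3 = r := by
            have h := Finset.card_filter_add_card_filter_not
              (s := (Finset.univ : Finset (Fin r))) (p := fun u => (u = t ∨ u = t' ∨ u = v))
            have hset : Finset.univ.filter (fun u : Fin r => (u = t ∨ u = t' ∨ u = v))
                = {t, t', v} := by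
              ext u; simp
            rw [hset] at h
            have h2 : ({t, t', v} : Finset (Fin r)).card = 3 := by
              rw [Finset.card_insert_of_notMem (by simp [htt', Ne.symm hvt]),
                  Finset.card_insert_of_notMem (by simp [Ne.symm hvs]), Finset.card_singleton]
            simp only [Finset.card_univ, Fintype.card_fin] at h
            omega
          have hcomp : (Finset.univ.filter
              (fun x : Fin (11 * r + 1) => ¬(c (0, x) = t ∨ c (0, x) = t' ∨ c (0, x) = v))).card
              ≤ (Finset.univ.filter (fun u : Fin r => ¬(u = t ∨ u = t' ∨ u = v))).card := by
            refine Finset.card_le_card_of_injOn (fun x => c (0, x)) ?_ ?_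
            · intro x hx
              simp only [Finset.mem_coe, Finset.mem_filter, Finset.mem_univ, true_and] at hx ⊢
              exact hx
            · intro x hx y hy hxy
              simp only [Finset.mem_coe, Finset.mem_filter, Finset.mem_univ, true_and] at hx hy
              push_neg at hx
              have hcard := hTriUnique i1 (hne0RW i1 hi1) v (htri i1 hi1) (c (0, x))
                hx.1 hx.2.1 hx.2.2
              refine Finset.card_le_one.1 hcard x (by simp) y ?_
              simp only [Finset.mem_filter, Finset.mem_univ, true_and]
              exact hxy.symm
          have hsplit := Finset.card_filter_add_card_filter_not
            (s := (Finset.univ : Finset (Fin (11 * r + 1))))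
            (p := fun x => (c (0, x) = t ∨ c (0, x) = t' ∨ c (0, x) = v))
          simp only [Finset.card_univ, Fintype.card_fin] at hsplit
          omega
        set PF : Finset (Fin (2 * r + 5) × Fin (2 * r + 5)) :=
          {(0, i1), (0, i2), (0, i3), (i1, i2), (i1, i3), (i2, i3)} with hPFdef
        have hPFne : ∀ pq ∈ PF, pq.1 ≠ pq.2 := by
          intro pq hpq
          rw [hPFdef] at hpq
          simp only [Finset.mem_insert, Finset.mem_singleton] at hpq
          rcases hpq with rfl | rfl | rfl | rfl | rfl | rfl
          · exact Ne.symm (hne0RW i1 hi1)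
          · exact Ne.symm (hne0RW i2 hi2)
          · exact Ne.symm (hne0RW i3 hi3)
          · exact h12
          · exact h13
          · exact h23
        have hval : ∀ x, (c (0, x) = t ∨ c (0, x) = t' ∨ c (0, x) = v) →
            ∀ j ∈ ({0, i1, i2, i3} : Finset (Fin (2 * r + 5))),
            (c (j, x) = t ∨ c (j, x) = t' ∨ c (j, x) = v) := by
          intro x hx0 j hj
          simp only [Finset.mem_insert, Finset.mem_singleton] at hj
          have key : ∀ i ∈ RW, (c (i, x) = t ∨ c (i, x) = t' ∨ c (i, x) = v) := by
            intro i hi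
            by_cases hd : c (i, x) = c (0, x)
            · rw [hd]; exact hx0
            · exact (htri i hi x hd).2
          rcases hj with rfl | rfl | rfl | rfl
          · exact hx0
          · exact key _ hi1
          · exact key _ hi2
          · exact key _ hi3
        have hwit : ∀ x : Fin (11 * r + 1), ∃ pq : Fin (2 * r + 5) × Fin (2 * r + 5),
            (c (0, x) = t ∨ c (0, x) = t' ∨ c (0, x) = v) →
            (pq ∈ PF ∧ c (pq.1, x) = c (pq.2, x)) := by
          intro x
          by_cases hx0 : (c (0, x) = t ∨ c (0, x) = t' ∨ c (0, x) = v)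
          swap
          · exact ⟨(0, i1), fun h => absurd h hx0⟩
          by_cases e1 : c (0, x) = c (i1, x)
          · exact ⟨(0, i1), fun _ => ⟨by rw [hPFdef]; simp, e1⟩⟩
          by_cases e2 : c (0, x) = c (i2, x)
          · exact ⟨(0, i2), fun _ => ⟨by rw [hPFdef]; simp, e2⟩⟩
          by_cases e3 : c (0, x) = c (i3, x)
          · exact ⟨(0, i3), fun _ => ⟨by rw [hPFdef]; simp, e3⟩⟩
          by_cases e4 : c (i1, x) = c (i2, x)
          · exact ⟨(i1, i2), fun _ => ⟨by rw [hPFdef]; simp, e4⟩⟩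
          by_cases e5 : c (i1, x) = c (i3, x)
          · exact ⟨(i1, i3), fun _ => ⟨by rw [hPFdef]; simp, e5⟩⟩
          by_cases e6 : c (i2, x) = c (i3, x)
          · exact ⟨(i2, i3), fun _ => ⟨by rw [hPFdef]; simp, e6⟩⟩
          exfalso
          have m0 := hval x hx0 0 (by simp)
          have m1 := hval x hx0 i1 (by simp)
          have m2 := hval x hx0 i2 (by simp)
          have m3 := hval x hx0 i3 (by simp)
          have hsub4 : ({c (0, x), c (i1, x), c (i2, x), c (i3, x)} : Finset (Fin r)) ⊆
              ({t, t', v} : Finset (Fin r)) := by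
            intro u hu
            simp only [Finset.mem_insert, Finset.mem_singleton] at hu ⊢
            rcases hu with rfl | rfl | rfl | rfl
            exacts [m0, m1, m2, m3]
          have hc4 : ({c (0, x), c (i1, x), c (i2, x), c (i3, x)} : Finset (Fin r)).card = 4 := by
            rw [Finset.card_insert_of_notMem (by simp [e1, e2, e3]),
                Finset.card_insert_of_notMem (by simp [e4, e5]),
                Finset.card_insert_of_notMem (by simp [e6]), Finset.card_singleton]
          have hle4 := Finset.card_le_card hsub4
          omega
        choose pf hpf using hwit
        have hle : (Finset.univ.filter
            (fun x : Fin (11 * r + 1) => c (0, x) = t ∨ c (0, x) = t' ∨ c (0, x) = v)).card ≤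
            (PF ×ˢ ({t, t', v} : Finset (Fin r))).card := by
          refine Finset.card_le_card_of_injOn (fun x => (pf x, c ((pf x).1, x))) ?_ ?_
          · intro x hx
            simp only [Finset.mem_coe, Finset.mem_filter, Finset.mem_univ, true_and] at hx
            have h := hpf x hx
            rw [Finset.mem_coe, Finset.mem_product]
            refine ⟨h.1, ?_⟩
            have hfst : (pf x).1 ∈ ({0, i1, i2, i3} : Finset (Fin (2 * r + 5))) := by
              have h' := h.1
              rw [hPFdef] at h'
              simp only [Finset.mem_insert, Finset.mem_singleton] at h'
              rcases h' with h' | h' | h' | h' | h' | h' <;> rw [h'] <;> simp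
            have h2 := hval x hx (pf x).1 hfst
            simp only [Finset.mem_insert, Finset.mem_singleton]
            exact h2
          · intro x hx y hy hxy
            simp only [Finset.mem_coe, Finset.mem_filter, Finset.mem_univ, true_and] at hx hy
            have h1 : pf x = pf y := congrArg Prod.fst hxy
            have h2 : c ((pf x).1, x) = c ((pf y).1, y) := congrArg Prod.snd hxy
            by_contra hne
            have hwx := hpf x hx
            have hwy := hpf y hy
            rw [← h1] at hwy h2
            exact hM (pf x).1 (pf x).2 x y (hPFne _ hwx.1) hne hwx.2
              (hwx.2.symm.trans h2) hwy.2
        have hPFcard : PF.card ≤ 6 := by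
          rw [hPFdef]
          calc ({(0, i1), (0, i2), (0, i3), (i1, i2), (i1, i3), (i2, i3)} :
              Finset (Fin (2 * r + 5) × Fin (2 * r + 5))).card
              ≤ ({(0, i2), (0, i3), (i1, i2), (i1, i3), (i2, i3)} :
                Finset (Fin (2 * r + 5) × Fin (2 * r + 5))).card + 1 := Finset.card_insert_le _ _
            _ ≤ (({(0, i3), (i1, i2), (i1, i3), (i2, i3)} :
                Finset (Fin (2 * r + 5) × Fin (2 * r + 5))).card + 1) + 1 :=
                Nat.add_le_add_right (Finset.card_insert_le _ _) 1
            _ ≤ ((({(i1, i2), (i1, i3), (i2, i3)} :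
                Finset (Fin (2 * r + 5) × Fin (2 * r + 5))).card + 1) + 1) + 1 :=
                Nat.add_le_add_right (Nat.add_le_add_right (Finset.card_insert_le _ _) 1) 1
            _ ≤ (((({(i1, i3), (i2, i3)} :
                Finset (Fin (2 * r + 5) × Fin (2 * r + 5))).card + 1) + 1) + 1) + 1 :=
                Nat.add_le_add_right (Nat.add_le_add_right
                  (Nat.add_le_add_right (Finset.card_insert_le _ _) 1) 1) 1
            _ ≤ ((((({(i2, i3)} :
                Finset (Fin (2 * r + 5) × Fin (2 * r + 5))).card + 1) + 1) + 1) + 1) + 1 :=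
                Nat.add_le_add_right (Nat.add_le_add_right (Nat.add_le_add_right
                  (Nat.add_le_add_right (Finset.card_insert_le _ _) 1) 1) 1) 1
            _ = 6 := by rw [Finset.card_singleton]
        have hprod : (PF ×ˢ ({t, t', v} : Finset (Fin r))).card ≤ 18 := by
          rw [Finset.card_product]
          have := Nat.mul_le_mul hPFcard hvcard
          omega
        omega
      have hcu := Finset.card_union_le RS RW
      omega
    · push_neg at hbig
      have hone : ∀ v : Fin r, v ≠ t → v ≠ t' →
          (Finset.univ.filter fun x => c (0, x) = v).card ≤ 1 := by
        intro v h1 h2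
        have := hbig v h1 h2
        omega
      have hYge : 10 * r + 3 ≤ Tt.card + Ts.card := by
        have hcomp : (Finset.univ.filter
            (fun x : Fin (11 * r + 1) => ¬(c (0, x) = t ∨ c (0, x) = t'))).card ≤ Kc.card := by
          refine Finset.card_le_card_of_injOn (fun x => c (0, x)) ?_ ?_
          · intro x hx
            simp only [Finset.mem_coe, Finset.mem_filter, Finset.mem_univ, true_and] at hx
            rw [hKcdef]
            simp only [Finset.mem_coe, Finset.mem_filter, Finset.mem_univ, true_and]
            exact hx
          · intro x hx y hy hxy
            simp only [Finset.mem_coe, Finset.mem_filter, Finset.mem_univ, true_and] at hx hy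
            push_neg at hx
            have hcard := hone (c (0, x)) hx.1 hx.2
            refine Finset.card_le_one.1 hcard x (by simp) y ?_
            simp only [Finset.mem_filter, Finset.mem_univ, true_and]
            exact hxy.symm
        have hsplit := Finset.card_filter_add_card_filter_not
          (s := (Finset.univ : Finset (Fin (11 * r + 1))))
          (p := fun x => (c (0, x) = t ∨ c (0, x) = t'))
        have hTT : (Finset.univ.filter
            (fun x : Fin (11 * r + 1) => (c (0, x) = t ∨ c (0, x) = t'))).card
            = Tt.card + Ts.card := by
          rw [Finset.filter_or, ← hTtdef, ← hTsdef]
          exact Finset.card_union_of_disjoint (by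
            rw [Finset.disjoint_left]
            intro x hx hx'
            exact htt' (((memTt x).1 hx).symm.trans ((memTs x).1 hx')))
        simp only [Finset.card_univ, Fintype.card_fin] at hsplit
        omega
      have hbv : ∀ (a b : Fin (2 * r + 5)), a ≠ b → ∀ v : Fin r,
          (Tt.filter fun x => c (a, x) = v ∧ c (b, x) = v).card +
          (Ts.filter fun x => c (a, x) = v ∧ c (b, x) = v).card ≤ 1 := by
        intro a b hab v
        have hdisj2 : Disjoint (Tt.filter fun x => c (a, x) = v ∧ c (b, x) = v)
            (Ts.filter fun x => c (a, x) = v ∧ c (b, x) = v) := by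
          rw [Finset.disjoint_left]
          intro x hx hx'
          exact htt' (((memTt x).1 (Finset.mem_filter.1 hx).1).symm.trans
            ((memTs x).1 (Finset.mem_filter.1 hx').1))
        rw [← Finset.card_union_of_disjoint hdisj2]
        refine agrB a b hab v _ ?_
        intro x hx
        rcases Finset.mem_union.1 hx with h | h
        · exact (Finset.mem_filter.1 h).2
        · exact (Finset.mem_filter.1 h).2
      have hmix : ∀ i ∈ RS, ∀ j ∈ RW, gz i = gz j → SH j := by
        intro i hi j hj heq
        have hij : i ≠ j := by
          rintro rfl
          exact (Finset.mem_filter.1 hj).2.1 (Finset.mem_filter.1 hi).2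
        obtain ⟨hjt, hjs, htrij⟩ := hgzRW j hj
        obtain ⟨hit, his, hstari⟩ := hgzRS i hi
        rw [heq] at hstari hit his
        have hsubA : (Tt.filter fun x => c (j, x) = gz j) ⊆
            (Tt.filter fun x => c (i, x) = gz j ∧ c (j, x) = gz j) ∪
            (Tt.filter fun x => c (i, x) = t) := by
          intro x hx
          have h := Finset.mem_filter.1 hx
          by_cases hc : c (i, x) = gz j
          · exact Finset.mem_union_left _ (Finset.mem_filter.2 ⟨h.1, hc, h.2⟩)
          · by_cases hd : c (i, x) = c (0, x)
            · exact Finset.mem_union_right _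
                (Finset.mem_filter.2 ⟨h.1, hd.trans ((memTt x).1 h.1)⟩)
            · rcases hstari x hd with h' | h'
              · exact absurd (h'.symm.trans ((memTt x).1 h.1)) hit
              · exact absurd h' hc
        have hsubB : (Ts.filter fun x => c (j, x) = gz j) ⊆
            (Ts.filter fun x => c (i, x) = gz j ∧ c (j, x) = gz j) ∪
            (Ts.filter fun x => c (i, x) = t') := by
          intro x hx
          have h := Finset.mem_filter.1 hx
          by_cases hc : c (i, x) = gz j
          · exact Finset.mem_union_left _ (Finset.mem_filter.2 ⟨h.1, hc, h.2⟩)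
          · by_cases hd : c (i, x) = c (0, x)
            · exact Finset.mem_union_right _
                (Finset.mem_filter.2 ⟨h.1, hd.trans ((memTs x).1 h.1)⟩)
            · rcases hstari x hd with h' | h'
              · exact absurd (h'.symm.trans ((memTs x).1 h.1)) his
              · exact absurd h' hc
        have hdA : (Tt.filter fun x => c (i, x) = t).card ≤ 1 := by
          refine agrB 0 i (Ne.symm (hne0RS i hi)) t _ ?_
          intro x hx
          have h := Finset.mem_filter.1 hx
          exact ⟨(memTt x).1 h.1, h.2⟩
        have hdB : (Ts.filter fun x => c (i, x) = t').card ≤ 1 := by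
          refine agrB 0 i (Ne.symm (hne0RS i hi)) t' _ ?_
          intro x hx
          have h := Finset.mem_filter.1 hx
          exact ⟨(memTs x).1 h.1, h.2⟩
        have hbb := hbv i j hij (gz j)
        have h1 := Finset.card_le_card hsubA
        have h2 := Finset.card_le_card hsubB
        have h3 := Finset.card_union_le
          (Tt.filter fun x => c (i, x) = gz j ∧ c (j, x) = gz j)
          (Tt.filter fun x => c (i, x) = t)
        have h4 := Finset.card_union_le
          (Ts.filter fun x => c (i, x) = gz j ∧ c (j, x) = gz j)
          (Ts.filter fun x => c (i, x) = t')
        have hT := hTriBound j (hne0RW j hj) (gz j) htrij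
        simp only [hSHdef]
        omega
      have hWW : ∀ i ∈ RW, ∀ j ∈ RW, i ≠ j → gz i = gz j → ¬ SH i → ¬ SH j → False := by
        intro i hi j hj hij heq nsi nsj
        obtain ⟨hit, his, htriI⟩ := hgzRW i hi
        obtain ⟨hjt, hjs, htriJ⟩ := hgzRW j hj
        rw [heq] at htriI
        have hTi := hTriBound i (hne0RW i hi) (gz j) htriI
        have hTj := hTriBound j (hne0RW j hj) (gz j) htriJ
        have hIA := Finset.card_inter_add_card_union
          (Tt.filter fun x => c (i, x) = gz j) (Tt.filter fun x => c (j, x) = gz j)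
        have hUA : ((Tt.filter fun x => c (i, x) = gz j) ∪
            (Tt.filter fun x => c (j, x) = gz j)).card ≤ Tt.card :=
          Finset.card_le_card (Finset.union_subset (Finset.filter_subset _ _)
            (Finset.filter_subset _ _))
        have hIB := Finset.card_inter_add_card_union
          (Ts.filter fun x => c (i, x) = gz j) (Ts.filter fun x => c (j, x) = gz j)
        have hUB : ((Ts.filter fun x => c (i, x) = gz j) ∪
            (Ts.filter fun x => c (j, x) = gz j)).card ≤ Ts.card :=
          Finset.card_le_card (Finset.union_subset (Finset.filter_subset _ _)
            (Finset.filter_subset _ _))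
        have hbb := hbv i j hij (gz j)
        have hiA : ((Tt.filter fun x => c (i, x) = gz j) ∩
            (Tt.filter fun x => c (j, x) = gz j)).card ≤
            (Tt.filter fun x => c (i, x) = gz j ∧ c (j, x) = gz j).card := by
          refine Finset.card_le_card ?_
          intro x hx
          have h := Finset.mem_inter.1 hx
          exact Finset.mem_filter.2 ⟨(Finset.mem_filter.1 h.1).1,
            (Finset.mem_filter.1 h.1).2, (Finset.mem_filter.1 h.2).2⟩
        have hiB : ((Ts.filter fun x => c (i, x) = gz j) ∩
            (Ts.filter fun x => c (j, x) = gz j)).card ≤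
            (Ts.filter fun x => c (i, x) = gz j ∧ c (j, x) = gz j).card := by
          refine Finset.card_le_card ?_
          intro x hx
          have h := Finset.mem_inter.1 hx
          exact Finset.mem_filter.2 ⟨(Finset.mem_filter.1 h.1).1,
            (Finset.mem_filter.1 h.1).2, (Finset.mem_filter.1 h.2).2⟩
        simp only [hSHdef] at nsi nsj
        omega
      have hfib : ∀ v ∈ Kc,
          (((RS ∪ RW).filter (fun i => gz i = v)).filter (fun i => ¬ SH i)).card ≤ 1 := by
        intro v hv
        refine Finset.card_le_one.mpr ?_
        intro a ha b hb
        have ha2 := Finset.mem_filter.1 ha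
        have hb2 := Finset.mem_filter.1 hb
        have ha3 := Finset.mem_filter.1 ha2.1
        have hb3 := Finset.mem_filter.1 hb2.1
        by_contra hab
        have hgab : gz a = gz b := ha3.2.trans hb3.2.symm
        rcases Finset.mem_union.1 ha3.1 with haS | haW <;>
          rcases Finset.mem_union.1 hb3.1 with hbS | hbW
        · exact hab (RSinj a haS b hbS hgab)
        · exact hb2.2 (hmix a haS b hbW hgab)
        · exact ha2.2 (hmix b hbS a haW hgab.symm)
        · exact hWW a haW b hbW hab hgab ha2.2 hb2.2
      have hmaps : ∀ i ∈ RS ∪ RW, gz i ∈ Kc := by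
        intro i hi
        rw [hKcdef]
        simp only [Finset.mem_filter, Finset.mem_univ, true_and]
        rcases Finset.mem_union.1 hi with h | h
        · rintro (h' | h')
          · exact (hgzRS i h).1 h'
          · exact (hgzRS i h).2.1 h'
        · rintro (h' | h')
          · exact (hgzRW i h).1 h'
          · exact (hgzRW i h).2.1 h'
      have hsum1 : (RS ∪ RW).card = ∑ v ∈ Kc, ((RS ∪ RW).filter (fun i => gz i = v)).card :=
        Finset.card_eq_sum_card_fiberwise hmaps
      have hsum2 : ((RS ∪ RW).filter SH).card =
          ∑ v ∈ Kc, (((RS ∪ RW).filter SH).filter (fun i => gz i = v)).card :=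
        Finset.card_eq_sum_card_fiberwise (fun i hi => hmaps i (Finset.mem_filter.1 hi).1)
      have hSHtwo : ((RS ∪ RW).filter SH).card ≤ 2 := by
        by_contra hcon
        push_neg at hcon
        obtain ⟨S, hS, hScard⟩ := Finset.exists_subset_card_eq (s := ((RS ∪ RW).filter SH)) (n := 3) (by omega)
        obtain ⟨a, b, d, hab, had, hbd, rfl⟩ := Finset.card_eq_three.1 hScard
        have hmemSH : ∀ u ∈ ({a, b, d} : Finset (Fin (2 * r + 5))), SH u := fun u hu =>
          (Finset.mem_filter.1 (hS hu)).2
        exact hSH3 a b d hab had hbd (hmemSH a (by simp)) (hmemSH b (by simp))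
          (hmemSH d (by simp))
      have hperv : ∀ v ∈ Kc, ((RS ∪ RW).filter (fun i => gz i = v)).card ≤
          (((RS ∪ RW).filter SH).filter (fun i => gz i = v)).card + 1 := by
        intro v hv
        have hsplit := Finset.card_filter_add_card_filter_not
          (s := (RS ∪ RW).filter (fun i => gz i = v)) (p := SH)
        have hswap : (((RS ∪ RW).filter (fun i => gz i = v)).filter SH) =
            (((RS ∪ RW).filter SH).filter (fun i => gz i = v)) := by
          ext a
          simp only [Finset.mem_filter]
          tauto
        rw [hswap] at hsplit
        have := hfib v hv
        omega
      calc (RS ∪ RW).card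
          = ∑ v ∈ Kc, ((RS ∪ RW).filter (fun i => gz i = v)).card := hsum1
        _ ≤ ∑ v ∈ Kc, ((((RS ∪ RW).filter SH).filter (fun i => gz i = v)).card + 1) :=
            Finset.sum_le_sum hperv
        _ = (∑ v ∈ Kc, (((RS ∪ RW).filter SH).filter (fun i => gz i = v)).card) + Kc.card := by
            rw [Finset.sum_add_distrib, Finset.sum_const, smul_eq_mul, mul_one]
        _ = ((RS ∪ RW).filter SH).card + Kc.card := by rw [← hsum2]
        _ ≤ 2 + Kc.card := Nat.add_le_add_right hSHtwo _
        _ ≤ r := by omega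
  -- the two pure star classes have at most 3 rows each
  have hpairT : ∀ (a b : Fin (2 * r + 5)), a ≠ b →
      ((Ts.filter fun x => c (a, x) = t) ∩ (Ts.filter fun x => c (b, x) = t)).card ≤ 1 := by
    intro a b hab
    refine agrB a b hab t _ ?_
    intro x hx
    have h := Finset.mem_inter.1 hx
    exact ⟨(Finset.mem_filter.1 h.1).2, (Finset.mem_filter.1 h.2).2⟩
  have hpairS : ∀ (a b : Fin (2 * r + 5)), a ≠ b →
      ((Tt.filter fun x => c (a, x) = t') ∩ (Tt.filter fun x => c (b, x) = t')).card ≤ 1 := by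
    intro a b hab
    refine agrB a b hab t' _ ?_
    intro x hx
    have h := Finset.mem_inter.1 hx
    exact ⟨(Finset.mem_filter.1 h.1).2, (Finset.mem_filter.1 h.2).2⟩
  have hR1card : R1.card ≤ 3 := by
    by_contra hcon
    push_neg at hcon
    obtain ⟨S, hS, hScard⟩ := Finset.exists_subset_card_eq (s := R1) (n := 4) (by omega)
    obtain ⟨i1, hi1S⟩ := Finset.card_pos.1 (show 0 < S.card by omega)
    have h3' : (S.erase i1).card = 3 := by rw [Finset.card_erase_of_mem hi1S, hScard]
    obtain ⟨i2, i3, i4, h23, h24, h34, herase⟩ := Finset.card_eq_three.1 h3'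
    have hi2E : i2 ∈ S.erase i1 := by rw [herase]; simp
    have hi3E : i3 ∈ S.erase i1 := by rw [herase]; simp
    have hi4E : i4 ∈ S.erase i1 := by rw [herase]; simp
    have h12 : i1 ≠ i2 := (Finset.ne_of_mem_erase hi2E).symm
    have h13 : i1 ≠ i3 := (Finset.ne_of_mem_erase hi3E).symm
    have h14 : i1 ≠ i4 := (Finset.ne_of_mem_erase hi4E).symm
    have hmem : ∀ k ∈ S, k ≠ (0 : Fin (2 * r + 5)) ∧
        ∀ x, c (k, x) ≠ c (0, x) → (c (0, x) = t ∨ c (k, x) = t) := by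
      intro k hk
      have hk1 := hS hk
      exact ⟨(hmemE k).1 (Finset.mem_filter.1 hk1).1, (Finset.mem_filter.1 hk1).2⟩
    have hlb : ∀ k ∈ S, Ts.card ≤ (Ts.filter fun x => c (k, x) = t).card + 1 := by
      intro k hk
      exact hStarTs k (hmem k hk).1 t htt' (hmem k hk).2
    exact gc_star4 Ts (Ts.filter fun x => c (i1, x) = t) (Ts.filter fun x => c (i2, x) = t)
      (Ts.filter fun x => c (i3, x) = t) (Ts.filter fun x => c (i4, x) = t) ht'3
      (Finset.filter_subset _ _) (Finset.filter_subset _ _) (Finset.filter_subset _ _)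
      (Finset.filter_subset _ _)
      (hlb i1 hi1S) (hlb i2 (Finset.erase_subset _ _ hi2E)) (hlb i3 (Finset.erase_subset _ _ hi3E))
      (hlb i4 (Finset.erase_subset _ _ hi4E))
      (hpairT i1 i2 h12) (hpairT i1 i3 h13) (hpairT i1 i4 h14)
      (hpairT i2 i3 h23) (hpairT i2 i4 h24) (hpairT i3 i4 h34)
  have hR2card : R2.card ≤ 3 := by
    by_contra hcon
    push_neg at hcon
    obtain ⟨S, hS, hScard⟩ := Finset.exists_subset_card_eq (s := R2) (n := 4) (by omega)
    obtain ⟨i1, hi1S⟩ := Finset.card_pos.1 (show 0 < S.card by omega)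
    have h3' : (S.erase i1).card = 3 := by rw [Finset.card_erase_of_mem hi1S, hScard]
    obtain ⟨i2, i3, i4, h23, h24, h34, herase⟩ := Finset.card_eq_three.1 h3'
    have hi2E : i2 ∈ S.erase i1 := by rw [herase]; simp
    have hi3E : i3 ∈ S.erase i1 := by rw [herase]; simp
    have hi4E : i4 ∈ S.erase i1 := by rw [herase]; simp
    have h12 : i1 ≠ i2 := (Finset.ne_of_mem_erase hi2E).symm
    have h13 : i1 ≠ i3 := (Finset.ne_of_mem_erase hi3E).symm
    have h14 : i1 ≠ i4 := (Finset.ne_of_mem_erase hi4E).symm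
    have hmem : ∀ k ∈ S, k ≠ (0 : Fin (2 * r + 5)) ∧
        ∀ x, c (k, x) ≠ c (0, x) → (c (0, x) = t' ∨ c (k, x) = t') := by
      intro k hk
      have hk1 := hS hk
      exact ⟨(hmemE k).1 (Finset.mem_filter.1 hk1).1, (Finset.mem_filter.1 hk1).2⟩
    have hlb : ∀ k ∈ S, Tt.card ≤ (Tt.filter fun x => c (k, x) = t').card + 1 := by
      intro k hk
      exact hStarTt k (hmem k hk).1 t' (Ne.symm htt') (hmem k hk).2
    exact gc_star4 Tt (Tt.filter fun x => c (i1, x) = t') (Tt.filter fun x => c (i2, x) = t')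
      (Tt.filter fun x => c (i3, x) = t') (Tt.filter fun x => c (i4, x) = t') ht3
      (Finset.filter_subset _ _) (Finset.filter_subset _ _) (Finset.filter_subset _ _)
      (Finset.filter_subset _ _)
      (hlb i1 hi1S) (hlb i2 (Finset.erase_subset _ _ hi2E)) (hlb i3 (Finset.erase_subset _ _ hi3E))
      (hlb i4 (Finset.erase_subset _ _ hi4E))
      (hpairS i1 i2 h12) (hpairS i1 i3 h13) (hpairS i1 i4 h14)
      (hpairS i2 i3 h23) (hpairS i2 i4 h24) (hpairS i3 i4 h34)
  -- final count
  have hc1 := Finset.card_le_card hcoverE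
  have hc2 := Finset.card_union_le (R1 ∪ R2) (RS ∪ RW)
  have hc3 := Finset.card_union_le R1 R2
  omega
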